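/- (Correctness of lattice compaction.) Let P be a duplicate-free list of variables with element set U, and let x ∉ U be a variable such that U is a superset of an optimal parents set of x, i.e. d(x, U) = d(x, univ \ {x}). Then the minimum of Q(L) over all duplicate-free enumerations L of all variables having prefix P equals the minimum of Q(L) over all duplicate-free enumerations L of all variables having prefix P ++ [x]. In other words, deleting from the dynamic programming lattice all outgoing edges of U other than the edge to U ∪ {x} does not change the shortest-path value through U. -/

import Mathlib

/-- `d s x U` : the score of selecting optimal parents of `x` from `U`,
defined as the minimum of `s x W` over all subsets `W ⊆ U`. -/
noncomputable def d {X : Type*} [DecidableEq X] (s : X → Finset X → ℝ)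
    (x : X) (U : Finset X) : ℝ :=
  U.powerset.inf' (Finset.powerset_nonempty U) (s x)

/-- `Qfrom s M U` : the cost of extending the lattice node `U` along the
ordering `M`, i.e. `Σ_k d(M_k, U ∪ S_k)` where `S_k` is the set of entries
of `M` preceding position `k`. -/
noncomputable def Qfrom {X : Type*} [DecidableEq X] (s : X → Finset X → ℝ) :
    List X → Finset X → ℝ
  | [], _ => 0
  | x :: M, U => d s x U + Qfrom s M (insert x U)

/-- `Q s L` : the cost of the ordering `L`, i.e. `Σ_k d(L_k, S_k)` where
`S_k` is the set of entries of `L` preceding position `k`; this is the score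
of the network in which each variable's parents are chosen optimally from
its predecessors in `L`. -/
noncomputable def Q {X : Type*} [DecidableEq X] (s : X → Finset X → ℝ)
    (L : List X) : ℝ :=
  Qfrom s L ∅

lemma d_anti {X : Type*} [DecidableEq X] (s : X → Finset X → ℝ)
    (x : X) {U V : Finset X} (h : U ⊆ V) : d s x V ≤ d s x U := by
  obtain ⟨W, hW, hWe⟩ := Finset.exists_mem_eq_inf' (Finset.powerset_nonempty U) (s x)
  calc d s x V ≤ s x W :=
        Finset.inf'_le _ (Finset.mem_powerset.mpr ((Finset.mem_powerset.mp hW).trans h))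
    _ = d s x U := hWe.symm

lemma Qfrom_mono {X : Type*} [DecidableEq X] (s : X → Finset X → ℝ)
    (A : List X) : ∀ {U V : Finset X}, U ⊆ V → Qfrom s A V ≤ Qfrom s A U := by
  induction A with
  | nil => intro U V h; simp [Qfrom]
  | cons a A ih =>
      intro U V h
      exact add_le_add (d_anti s a h) (ih (Finset.insert_subset_insert a h))

lemma Qfrom_append {X : Type*} [DecidableEq X] (s : X → Finset X → ℝ)
    (A : List X) : ∀ (B : List X) (U : Finset X),
    Qfrom s (A ++ B) U = Qfrom s A U + Qfrom s B (U ∪ A.toFinset) := by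
  induction A with
  | nil => intro B U; simp [Qfrom]
  | cons a A ih =>
      intro B U
      rw [List.cons_append]
      show d s a U + Qfrom s (A ++ B) (insert a U)
          = d s a U + Qfrom s A (insert a U) + Qfrom s B (U ∪ (a :: A).toFinset)
      rw [ih, List.toFinset_cons, Finset.union_insert, ← Finset.insert_union, add_assoc]

lemma exists_ext {X : Type*} [Fintype X] [DecidableEq X] (P0 : List X) (h : P0.Nodup) :
    ∃ L : List X, L.Nodup ∧ (∀ z, z ∈ L) ∧ P0 <+: L := by
  refine ⟨P0 ++ (Finset.univ \ P0.toFinset).toList, ?_, ?_, List.prefix_append _ _⟩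
  · refine List.Nodup.append h (Finset.nodup_toList _) ?_
    intro a ha hb
    rw [Finset.mem_toList, Finset.mem_sdiff] at hb
    exact hb.2 (List.mem_toFinset.mpr ha)
  · intro z
    by_cases hz : z ∈ P0 <;> simp [Finset.mem_toList, hz]

lemma finite_Qset {X : Type*} [Fintype X] [DecidableEq X]
    (s : X → Finset X → ℝ) (P0 : List X) :
    {r : ℝ | ∃ L : List X, L.Nodup ∧ (∀ z : X, z ∈ L) ∧
        P0 <+: L ∧ Q s L = r}.Finite := by
  have : {r : ℝ | ∃ L : List X, L.Nodup ∧ (∀ z : X, z ∈ L) ∧ P0 <+: L ∧ Q s L = r}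
      ⊆ Q s '' {L : List X | L.length = Fintype.card X} := by
    rintro r ⟨L, hnd, hfull, _, hQ⟩
    refine ⟨L, ?_, hQ⟩
    have h1 : L.length ≤ Fintype.card X := hnd.length_le_card
    have h2 : Fintype.card X ≤ L.length := by
      have : L.toFinset = Finset.univ := by
        ext z; simp [hfull z]
      calc Fintype.card X = L.toFinset.card := by rw [this]; simp
        _ ≤ L.length := List.toFinset_card_le L
    exact le_antisymm h1 h2
  exact Set.Finite.subset ((List.finite_length_eq X (Fintype.card X)).image (Q s)) this

/-- Correctness of lattice compaction: if the prefix set `U = P.toFinset` is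
a superset of an optimal parents set of `x`, then the minimum of `Q` over
all duplicate-free enumerations of all variables with prefix `P` equals the
minimum over those with prefix `P ++ [x]`. -/
theorem lattice_compaction_correct
    {X : Type*} [Fintype X] [DecidableEq X] [Nonempty X]
    (s : X → Finset X → ℝ) (P : List X) (x : X)
    (hP : P.Nodup)
    (hx : x ∉ P.toFinset)
    (hopt : d s x P.toFinset = d s x (Finset.univ \ {x})) :
    sInf {r : ℝ | ∃ L : List X, L.Nodup ∧ (∀ z : X, z ∈ L) ∧
        P <+: L ∧ Q s L = r} =
    sInf {r : ℝ | ∃ L : List X, L.Nodup ∧ (∀ z : X, z ∈ L) ∧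
        (P ++ [x]) <+: L ∧ Q s L = r} := by
  set S1 := {r : ℝ | ∃ L : List X, L.Nodup ∧ (∀ z : X, z ∈ L) ∧ P <+: L ∧ Q s L = r}
  set S2 := {r : ℝ | ∃ L : List X, L.Nodup ∧ (∀ z : X, z ∈ L) ∧ (P ++ [x]) <+: L ∧ Q s L = r}
  have hPx : (P ++ [x]).Nodup := by
    refine List.Nodup.append hP (List.nodup_singleton x) ?_
    intro a ha hb
    rw [List.mem_singleton] at hb
    exact hx (List.mem_toFinset.mpr (hb ▸ ha))
  have hne1 : S1.Nonempty := by
    obtain ⟨L, h1, h2, h3⟩ := exists_ext P hP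
    exact ⟨Q s L, L, h1, h2, h3, rfl⟩
  have hne2 : S2.Nonempty := by
    obtain ⟨L, h1, h2, h3⟩ := exists_ext (P ++ [x]) hPx
    exact ⟨Q s L, L, h1, h2, h3, rfl⟩
  have hfin1 : S1.Finite := finite_Qset s P
  have hfin2 : S2.Finite := finite_Qset s (P ++ [x])
  have hbdd1 : BddBelow S1 := hfin1.bddBelow
  have hbdd2 : BddBelow S2 := hfin2.bddBelow
  apply le_antisymm
  · -- S2 ⊆ S1
    refine csInf_le_csInf hbdd1 hne2 ?_
    rintro r ⟨L, h1, h2, h3, h4⟩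
    exact ⟨L, h1, h2, (List.prefix_append P [x]).trans h3, h4⟩
  · refine le_csInf hne1 ?_
    rintro r ⟨L, hnd, hfull, ⟨M, hM⟩, hQ⟩
    -- x ∈ M
    have hxM : x ∈ M := by
      have := hfull x
      rw [← hM, List.mem_append] at this
      rcases this with h | h
      · exact absurd (List.mem_toFinset.mpr h) hx
      · exact h
    obtain ⟨A, B, hAB⟩ := List.append_of_mem hxM
    subst hAB
    subst hM
    -- L' := P ++ x :: (A ++ B)
    set L' : List X := P ++ x :: (A ++ B) with hL'
    have hperm : L'.Perm (P ++ (A ++ x :: B)) :=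
      (List.perm_middle.symm).append_left P
    have hnd' : L'.Nodup := hperm.nodup_iff.mpr hnd
    have hfull' : ∀ z, z ∈ L' := fun z => hperm.mem_iff.mpr (hfull z)
    have hpre' : (P ++ [x]) <+: L' := ⟨A ++ B, by simp [hL']⟩
    have hxUA : x ∉ P.toFinset ∪ A.toFinset := by
      have hxA : x ∉ A := by
        have := hnd.of_append_right
        rw [List.nodup_append] at this
        exact fun hxa => this.2.2 x hxa x List.mem_cons_self rfl
      simp only [Finset.mem_union, List.mem_toFinset]
      rintro (h | h)
      · exact hx (by simpa using h)
      · exact hxA h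
    have hsub : P.toFinset ∪ A.toFinset ⊆ Finset.univ \ {x} := by
      intro y hy
      rw [Finset.mem_sdiff, Finset.mem_singleton]
      exact ⟨Finset.mem_univ y, fun h => hxUA (h ▸ hy)⟩
    -- key inequality
    have hQle : Q s L' ≤ Q s (P ++ (A ++ x :: B)) := by
      simp only [Q, hL', Qfrom_append, Qfrom, Finset.empty_union]
      rw [Finset.insert_union]
      have h1 : d s x P.toFinset ≤ d s x (P.toFinset ∪ A.toFinset) :=
        hopt ▸ d_anti s x hsub
      have h2 : Qfrom s A (insert x P.toFinset) ≤ Qfrom s A P.toFinset :=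
        Qfrom_mono s A (Finset.subset_insert x _)
      have h3 : insert x (P.toFinset ∪ A.toFinset)
          = insert x P.toFinset ∪ A.toFinset := (Finset.insert_union x _ _).symm
      rw [h3]
      linarith
    calc sInf S2 ≤ Q s L' := csInf_le hbdd2 ⟨L', hnd', hfull', hpre', rfl⟩
      _ ≤ Q s (P ++ (A ++ x :: B)) := hQle
      _ = r := hQ
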